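/- Let p be an offspring distribution with p(0) > 0, p(0)+p(1) < 1, finite mean, and q a mark function with ∃k, p(k)q(k) > 0. Fix s ∈ (0,1) and let κ(s) ∈ (0,1) be the fixed point of f_s(t) = E[s^{M_1} t^{Z_1}]. Then the process B_n = s^{M_n} κ(s)^{Z_n − 1} is a bounded nonnegative martingale with respect to (F_n), with B_0 = 1. -/

import Mathlib

open MeasureTheory ProbabilityTheory Filter Finset
open scoped ENNReal NNReal Topology

private lemma measurable_comp_nat' {Ω α : Type*} {m : MeasurableSpace Ω} [MeasurableSpace α]
    {Z : Ω → ℕ} (hZ : Measurable[m] Z) {F : ℕ → Ω → α} (hF : ∀ z, Measurable[m] (F z)) :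
    Measurable[m] (fun ω => F (Z ω) ω) := by
  intro A hA
  have h : (fun ω => F (Z ω) ω) ⁻¹' A = ⋃ z, ({ω | Z ω = z} ∩ F z ⁻¹' A) := by
    ext ω
    simp only [Set.mem_preimage, Set.mem_iUnion, Set.mem_inter_iff, Set.mem_setOf_eq]
    constructor
    · intro hω; exact ⟨Z ω, rfl, hω⟩
    · rintro ⟨z, hz, hω⟩; rw [hz]; exact hω
  rw [h]
  exact MeasurableSet.iUnion fun z => (hZ (measurableSet_singleton z)).inter (hF z hA)

theorem stmt_13
    {Ω : Type*} [mΩ : MeasurableSpace Ω] (μ : Measure Ω) [IsProbabilityMeasure μ]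
    (p q : ℕ → ℝ) (hp : ∀ k, 0 ≤ p k) (hpsum : ∑' k, p k = 1)
    (hq : ∀ k, q k ∈ Set.Icc (0 : ℝ) 1)
    (hdeg : p 0 + p 1 < 1) (hmark : ∃ k, 0 < p k * q k)
    (ξ : ℕ → ℕ → Ω → ℕ × Bool)
    (hξmeas : ∀ n i, Measurable (ξ n i))
    (hξindep : iIndepFun
      (fun ni : ℕ × ℕ => ξ ni.1 ni.2) μ)
    (hξlaw : ∀ n i k η, μ {ω | ξ n i ω = (k, η)} =
      ENNReal.ofReal (p k * if η then q k else 1 - q k))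
    (Z M : ℕ → Ω → ℕ)
    (hZ0 : ∀ ω, Z 0 ω = 1)
    (hZrec : ∀ n ω, Z (n + 1) ω = ∑ i ∈ Finset.range (Z n ω), (ξ n i ω).1)
    (hM0 : ∀ ω, M 0 ω = 0)
    (hMrec : ∀ n ω, M (n + 1) ω = M n ω +
      ∑ i ∈ Finset.range (Z n ω), (if (ξ n i ω).2 then 1 else 0))
    (ℱ : Filtration ℕ mΩ)
    (hℱ : ∀ n, ℱ n = ⨆ (m : ℕ) (_ : m < n) (i : ℕ),
      MeasurableSpace.comap (ξ m i) inferInstance)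
    (hp0 : 0 < p 0)
    (s : ℝ) (hs : s ∈ Set.Ioo (0 : ℝ) 1)
    (κ : ℝ) (hκ : κ ∈ Set.Ioo (0 : ℝ) 1)
    (hκfix : (∫ ω, s ^ M 1 ω * κ ^ Z 1 ω ∂μ) = κ) :
    Martingale (fun n ω => s ^ M n ω * κ ^ ((Z n ω : ℤ) - 1)) ℱ μ ∧
      (∀ n ω, 0 ≤ s ^ M n ω * κ ^ ((Z n ω : ℤ) - 1)) ∧
      (∃ C, ∀ n ω, s ^ M n ω * κ ^ ((Z n ω : ℤ) - 1) ≤ C) ∧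
      ∀ ω, s ^ M 0 ω * κ ^ ((Z 0 ω : ℤ) - 1) = 1 := by
  obtain ⟨hs0, hs1⟩ := hs
  obtain ⟨hκ0, hκ1⟩ := hκ
  have hκne : κ ≠ 0 := ne_of_gt hκ0
  set g : ℕ × Bool → ℝ := fun x => (if x.2 then s else 1) * κ ^ x.1 with hgdef
  have hg0 : ∀ x, 0 ≤ g x := by
    intro x
    exact mul_nonneg (by split <;> [exact hs0.le; exact zero_le_one]) (pow_nonneg hκ0.le _)
  -- basic measurable-space facts
  set mS : ℕ × ℕ → MeasurableSpace Ω :=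
    fun j => MeasurableSpace.comap (ξ j.1 j.2) inferInstance with hmS
  have h_le : ∀ j, mS j ≤ mΩ := fun j => (hξmeas j.1 j.2).comap_le
  have hξself : ∀ n i, Measurable[mS (n, i)] (ξ n i) := fun n i =>
    Measurable.of_comap_le le_rfl
  have hFle : ∀ n (S : Set (ℕ × ℕ)), (∀ j : ℕ × ℕ, j.1 < n → j ∈ S) →
      ℱ n ≤ ⨆ j ∈ S, mS j := by
    intro n S hS
    rw [hℱ n]
    refine iSup_le fun m => iSup_le fun hmn => iSup_le fun i => ?_
    exact le_iSup_of_le (m, i) (le_iSup (fun _ : (m, i) ∈ S => mS (m, i)) (hS (m, i) hmn))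
  have hcomap_le : ∀ m i n, m < n → mS (m, i) ≤ ℱ n := by
    intro m i n hmn
    rw [hℱ n]
    exact le_iSup_of_le m (le_iSup_of_le hmn
      (le_iSup (fun i => MeasurableSpace.comap (ξ m i) inferInstance) i))
  have hξF : ∀ m i n, m < n → Measurable[ℱ n] (ξ m i) := fun m i n h =>
    (hξself m i).mono (hcomap_le m i n h) le_rfl
  -- measurability of Z n, M n with respect to ℱ n
  have hZMmeas : ∀ n, Measurable[ℱ n] (Z n) ∧ Measurable[ℱ n] (M n) := by
    intro n
    induction n with
    | zero =>
      constructor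
      · have h : Z 0 = fun _ => 1 := funext hZ0
        rw [h]; exact measurable_const
      · have h : M 0 = fun _ => 0 := funext hM0
        rw [h]; exact measurable_const
    | succ n ih =>
      have hZn : Measurable[ℱ (n + 1)] (Z n) := ih.1.mono (ℱ.mono n.le_succ) le_rfl
      have hMn : Measurable[ℱ (n + 1)] (M n) := ih.2.mono (ℱ.mono n.le_succ) le_rfl
      have hsum : ∀ z : ℕ, Measurable[ℱ (n + 1)]
          (fun ω => ∑ i ∈ Finset.range z, (ξ n i ω).1) := fun z =>
        Finset.measurable_sum _ fun i _ =>
          measurable_fst.comp (hξF n i (n + 1) n.lt_succ_self)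
      have hind : ∀ z : ℕ, Measurable[ℱ (n + 1)]
          (fun ω => M n ω + ∑ i ∈ Finset.range z, (if (ξ n i ω).2 then 1 else 0 : ℕ)) :=
        fun z => hMn.add (Finset.measurable_sum _ fun i _ =>
          (measurable_of_countable (fun x : ℕ × Bool => (if x.2 then 1 else 0 : ℕ))).comp
            (hξF n i (n + 1) n.lt_succ_self))
      constructor
      · have h : Z (n + 1) =
            fun ω => (fun z ω' => ∑ i ∈ Finset.range z, (ξ n i ω').1) (Z n ω) ω :=
          funext (hZrec n)
        rw [h]
        exact measurable_comp_nat' hZn hsum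
      · have h : M (n + 1) = fun ω =>
            (fun z ω' => M n ω' + ∑ i ∈ Finset.range z, (if (ξ n i ω').2 then 1 else 0))
              (Z n ω) ω :=
          funext (hMrec n)
        rw [h]
        exact measurable_comp_nat' hZn hind
  -- bounds
  have hBpos : ∀ n ω, 0 < s ^ M n ω * κ ^ ((Z n ω : ℤ) - 1) := fun n ω =>
    mul_pos (pow_pos hs0 _) (zpow_pos hκ0 _)
  have hBle : ∀ n ω, s ^ M n ω * κ ^ ((Z n ω : ℤ) - 1) ≤ κ⁻¹ := by
    intro n ω
    have h1 : s ^ M n ω ≤ 1 := pow_le_one₀ hs0.le hs1.le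
    have h2 : κ ^ ((Z n ω : ℤ) - 1) ≤ κ ^ (-1 : ℤ) :=
      zpow_le_zpow_right_of_le_one₀ hκ0 hκ1.le (by omega)
    calc s ^ M n ω * κ ^ ((Z n ω : ℤ) - 1) ≤ 1 * κ ^ (-1 : ℤ) :=
          mul_le_mul h1 h2 (zpow_pos hκ0 _).le zero_le_one
      _ = κ⁻¹ := by rw [one_mul, zpow_neg_one]
  have hBmeasF : ∀ n, Measurable[ℱ n] (fun ω => s ^ M n ω * κ ^ ((Z n ω : ℤ) - 1)) :=
    fun n =>
      ((measurable_of_countable (fun k : ℕ => s ^ k)).comp (hZMmeas n).2).mul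
        ((measurable_of_countable (fun k : ℕ => κ ^ ((k : ℤ) - 1))).comp (hZMmeas n).1)
  have hBint : ∀ n, Integrable (fun ω => s ^ M n ω * κ ^ ((Z n ω : ℤ) - 1)) μ := by
    intro n
    refine (integrable_const κ⁻¹).mono'
      (((hBmeasF n).mono (ℱ.le n) le_rfl).aestronglyMeasurable) (ae_of_all _ fun ω => ?_)
    rw [Real.norm_eq_abs, abs_of_nonneg (hBpos n ω).le]
    exact hBle n ω
  -- all ξ n i have the same law
  have hmap : ∀ n i, μ.map (ξ n i) = μ.map (ξ 0 0) := by
    intro n i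
    refine Measure.ext_of_singleton fun a => ?_
    obtain ⟨k, η⟩ := a
    rw [Measure.map_apply (hξmeas n i) (measurableSet_singleton _),
      Measure.map_apply (hξmeas 0 0) (measurableSet_singleton _)]
    have e1 : ξ n i ⁻¹' {(k, η)} = {ω | ξ n i ω = (k, η)} := by ext ω; simp
    have e2 : ξ 0 0 ⁻¹' {(k, η)} = {ω | ξ 0 0 ω = (k, η)} := by ext ω; simp
    rw [e1, e2, hξlaw n i k η, hξlaw 0 0 k η]
  have key00 : ∫ ω, g (ξ 0 0 ω) ∂μ = κ := by
    rw [← hκfix]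
    refine integral_congr_ae (ae_of_all _ fun ω => ?_)
    have hZ1 : Z 1 ω = (ξ 0 0 ω).1 := by
      rw [hZrec 0 ω, hZ0 ω, Finset.sum_range_one]
    have hM1 : M 1 ω = (if (ξ 0 0 ω).2 then 1 else 0) := by
      rw [hMrec 0 ω, hM0 ω, hZ0 ω, Finset.sum_range_one, zero_add]
    show g (ξ 0 0 ω) = s ^ M 1 ω * κ ^ Z 1 ω
    rw [hZ1, hM1]
    by_cases hb : (ξ 0 0 ω).2 <;> simp [hgdef, hb]
  have hgexp : ∀ n i, ∫ ω, g (ξ n i ω) ∂μ = κ := by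
    intro n i
    have h1 : ∫ ω, g (ξ n i ω) ∂μ = ∫ x, g x ∂(μ.map (ξ n i)) :=
      (integral_map (hξmeas n i).aemeasurable
        (measurable_of_countable g).aestronglyMeasurable).symm
    rw [h1, hmap n i, integral_map (hξmeas 0 0).aemeasurable
      (measurable_of_countable g).aestronglyMeasurable, key00]
  -- main independence computation
  have L1 : ∀ n z (A : Set Ω), MeasurableSet[ℱ n] A →
      ∫ ω in A, (∏ i ∈ Finset.range z, g (ξ n i ω)) ∂μ = κ ^ z * (μ A).toReal := by
    intro n z
    induction z with
    | zero =>
      intro A hA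
      simp [Finset.prod_range_zero, setIntegral_const, measureReal_def]
    | succ z ih =>
      intro A hA
      have hAm : MeasurableSet A := ℱ.le n A hA
      set X : Ω → ℝ :=
        fun ω => A.indicator (fun _ => (1 : ℝ)) ω * ∏ i ∈ Finset.range z, g (ξ n i ω) with hX
      set Y : Ω → ℝ := fun ω => g (ξ n z ω) with hYdef
      set S : Set (ℕ × ℕ) := {j | j.1 < n ∨ (j.1 = n ∧ j.2 < z)} with hSdef
      have hdis : Disjoint S {(n, z)} := by
        rw [Set.disjoint_singleton_right]
        simp [hSdef]
      have hIndep : Indep (⨆ j ∈ S, mS j) (⨆ j ∈ ({(n, z)} : Set (ℕ × ℕ)), mS j) μ :=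
        indep_iSup_of_disjoint h_le hξindep hdis
      have hsingle : (⨆ j ∈ ({(n, z)} : Set (ℕ × ℕ)), mS j) = mS (n, z) := by
        simp
      rw [hsingle] at hIndep
      have hXmeas : Measurable[⨆ j ∈ S, mS j] X := by
        have hind : Measurable[⨆ j ∈ S, mS j] (A.indicator (fun _ => (1 : ℝ))) :=
          (measurable_const.indicator hA).mono (hFle n S fun j hj => Or.inl hj) le_rfl
        have hprod : Measurable[⨆ j ∈ S, mS j]
            (fun ω => ∏ i ∈ Finset.range z, g (ξ n i ω)) := by
          refine Finset.measurable_prod _ fun i hi => ?_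
          have hmem : (n, i) ∈ S := Or.inr ⟨rfl, Finset.mem_range.mp hi⟩
          exact (measurable_of_countable g).comp ((hξself n i).mono
            (le_iSup_of_le (n, i) (le_iSup (fun _ : (n, i) ∈ S => mS (n, i)) hmem)) le_rfl)
        exact hind.mul hprod
      have hYmeas : Measurable[mS (n, z)] Y := (measurable_of_countable g).comp (hξself n z)
      have hIndepFun : IndepFun X Y μ :=
        indep_of_indep_of_le_left (indep_of_indep_of_le_right hIndep hYmeas.comap_le)
          hXmeas.comap_le
      have hXnn : 0 ≤ X := fun ω =>
        mul_nonneg (Set.indicator_nonneg (fun _ _ => zero_le_one) ω)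
          (Finset.prod_nonneg fun i _ => hg0 _)
      have hYnn : 0 ≤ Y := fun ω => hg0 _
      have hXm : AEMeasurable X μ :=
        ((measurable_const.indicator hAm).mul
          (Finset.measurable_prod _ fun i _ =>
            (measurable_of_countable g).comp (hξmeas n i))).aemeasurable
      have hYm : AEMeasurable Y μ :=
        ((measurable_of_countable g).comp (hξmeas n z)).aemeasurable
      have hmul := hIndepFun.integral_mul_eq_mul_integral hXm.aestronglyMeasurable hYm.aestronglyMeasurable
      have e1 : ∫ ω in A, (∏ i ∈ Finset.range (z + 1), g (ξ n i ω)) ∂μ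
          = ∫ ω, (X * Y) ω ∂μ := by
        rw [← integral_indicator hAm]
        refine integral_congr_ae (ae_of_all _ fun ω => ?_)
        by_cases hω : ω ∈ A
        · simp [hX, hYdef, Set.indicator_of_mem hω, Finset.prod_range_succ, mul_assoc]
        · simp [hX, hYdef, Set.indicator_of_notMem hω]
      have e2 : ∫ ω, X ω ∂μ = κ ^ z * (μ A).toReal := by
        have h : ∫ ω, X ω ∂μ
            = ∫ ω, A.indicator (fun ω' => ∏ i ∈ Finset.range z, g (ξ n i ω')) ω ∂μ := by
          refine integral_congr_ae (ae_of_all _ fun ω => ?_)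
          by_cases hω : ω ∈ A
          · simp [hX, Set.indicator_of_mem hω]
          · simp [hX, Set.indicator_of_notMem hω]
        rw [h, integral_indicator hAm, ih A hA]
      rw [e1, hmul, e2, hgexp n z]
      ring
  -- the martingale property via set integrals
  have hAdapted : StronglyAdapted ℱ (fun n ω => s ^ M n ω * κ ^ ((Z n ω : ℤ) - 1)) := fun n =>
    (hBmeasF n).stronglyMeasurable
  have hMart : Martingale (fun n ω => s ^ M n ω * κ ^ ((Z n ω : ℤ) - 1)) ℱ μ := by
    refine martingale_of_setIntegral_eq_succ hAdapted hBint ?_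
    intro n A hA
    have hAm : MeasurableSet A := ℱ.le n A hA
    set e : ℕ × ℕ → Set Ω := fun mz => A ∩ {ω | M n ω = mz.1 ∧ Z n ω = mz.2} with he
    have heF : ∀ mz, MeasurableSet[ℱ n] (e mz) := by
      intro mz
      have h : e mz = A ∩ ((M n ⁻¹' {mz.1}) ∩ (Z n ⁻¹' {mz.2})) := by
        ext ω; simp [he]
      rw [h]
      exact hA.inter (((hZMmeas n).2 (measurableSet_singleton _)).inter
        ((hZMmeas n).1 (measurableSet_singleton _)))
    have hem : ∀ mz, MeasurableSet (e mz) := fun mz => ℱ.le n _ (heF mz)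
    have hdisj : Pairwise (Function.onFun Disjoint e) := by
      intro a b hab
      refine Set.disjoint_left.mpr ?_
      rintro ω ⟨-, h1, h2⟩ ⟨-, h3, h4⟩
      exact hab (Prod.ext (by rw [← h1, h3]) (by rw [← h2, h4]))
    have hunion : (⋃ mz : ℕ × ℕ, e mz) = A := by
      ext ω
      simp only [Set.mem_iUnion, he, Set.mem_inter_iff, Set.mem_setOf_eq]
      constructor
      · rintro ⟨mz, h, -⟩; exact h
      · intro h; exact ⟨(M n ω, Z n ω), h, rfl, rfl⟩
    have hsplit : ∀ k : ℕ, ∫ ω in A, (s ^ M k ω * κ ^ ((Z k ω : ℤ) - 1)) ∂μ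
        = ∑' mz : ℕ × ℕ, ∫ ω in e mz, (s ^ M k ω * κ ^ ((Z k ω : ℤ) - 1)) ∂μ := by
      intro k
      rw [← hunion]
      exact integral_iUnion hem hdisj (hBint k).integrableOn
    rw [hsplit n, hsplit (n + 1)]
    refine tsum_congr fun mz => ?_
    obtain ⟨m, z⟩ := mz
    -- left side: constant on e (m, z)
    have hl : ∫ ω in e (m, z), (s ^ M n ω * κ ^ ((Z n ω : ℤ) - 1)) ∂μ
        = (μ (e (m, z))).toReal * (s ^ m * κ ^ ((z : ℤ) - 1)) := by
      rw [setIntegral_congr_fun (hem (m, z))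
        (g := fun _ => s ^ m * κ ^ ((z : ℤ) - 1)) ?_]
      · rw [setIntegral_const, smul_eq_mul, measureReal_def]
      · rintro ω ⟨-, h1, h2⟩
        simp only at h1 h2
        simp only [h1, h2]
    -- right side
    have hr : ∫ ω in e (m, z), (s ^ M (n + 1) ω * κ ^ ((Z (n + 1) ω : ℤ) - 1)) ∂μ
        = s ^ m * κ⁻¹ * (κ ^ z * (μ (e (m, z))).toReal) := by
      have hcongr : ∫ ω in e (m, z), (s ^ M (n + 1) ω * κ ^ ((Z (n + 1) ω : ℤ) - 1)) ∂μ
          = ∫ ω in e (m, z), (s ^ m * κ⁻¹ * ∏ i ∈ Finset.range z, g (ξ n i ω)) ∂μ := by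
        refine setIntegral_congr_fun (hem (m, z)) ?_
        rintro ω ⟨-, h1, h2⟩
        simp only at h1 h2
        have hZn1 : Z (n + 1) ω = ∑ i ∈ Finset.range z, (ξ n i ω).1 := by
          rw [hZrec n ω, h2]
        have hMn1 : M (n + 1) ω
            = m + ∑ i ∈ Finset.range z, (if (ξ n i ω).2 then 1 else 0) := by
          rw [hMrec n ω, h1, h2]
        have hsD : s ^ (∑ i ∈ Finset.range z, (if (ξ n i ω).2 then 1 else 0 : ℕ))
            = ∏ i ∈ Finset.range z, (if (ξ n i ω).2 then s else 1) := by
          rw [← Finset.prod_pow_eq_pow_sum]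
          refine Finset.prod_congr rfl fun i _ => ?_
          by_cases hb : (ξ n i ω).2 <;> simp [hb]
        have hκW : κ ^ (∑ i ∈ Finset.range z, (ξ n i ω).1)
            = ∏ i ∈ Finset.range z, κ ^ (ξ n i ω).1 :=
          (Finset.prod_pow_eq_pow_sum _ _ _).symm
        have hzpow : κ ^ ((Z (n + 1) ω : ℤ) - 1)
            = κ ^ (Z (n + 1) ω) * κ⁻¹ := by
          rw [zpow_sub₀ hκne, zpow_one, zpow_natCast, div_eq_mul_inv]
        show s ^ M (n + 1) ω * κ ^ ((Z (n + 1) ω : ℤ) - 1)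
            = s ^ m * κ⁻¹ * ∏ i ∈ Finset.range z, g (ξ n i ω)
        rw [hzpow, hMn1, hZn1, pow_add, hsD, hκW]
        simp only [hgdef]
        rw [Finset.prod_mul_distrib]
        ring
      rw [hcongr, integral_const_mul, L1 n z (e (m, z)) (heF (m, z))]
    rw [hl, hr]
    have hzz : κ ^ ((z : ℤ) - 1) = κ ^ z * κ⁻¹ := by
      rw [zpow_sub₀ hκne, zpow_one, zpow_natCast, div_eq_mul_inv]
    rw [hzz]
    ring
  refine ⟨hMart, fun n ω => (hBpos n ω).le, ⟨κ⁻¹, hBle⟩, fun ω => ?_⟩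
  rw [hZ0, hM0]
  norm_num
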